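/- L¹ control of the electric field by the truncated energy and the number of points: There is a universal constant K such that for every N ≥ 2, every configuration X_N of pairwise distinct points of ℝ², every compactly supported probability measure μ₀ with bounded density, and every bounded measurable set Ω ⊂ ℝ²: ∫_Ω |∇h^{μ₀}(z)| dz ≤ Leb(Ω)^{1/2}·(∫_Ω |E_{r⃗}|²)^{1/2} + K·Points(Ω)·N^{-1/2}, where Leb(Ω) is the Lebesgue measure of Ω. In particular ∇h^{μ₀} is integrable on Ω. -/

import Mathlib

open MeasureTheory Filter Metric
open scoped Topology ENNReal NNReal RealInnerProductSpace BigOperators Classical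

noncomputable section

/-- The plane `ℝ²`. -/
abbrev R2 : Type := EuclideanSpace ℝ (Fin 2)

/-- Fluctuation of the linear statistics associated to `φ`:
`⟨φ, M_N⟩ = ∑ φ(x_i) − N ∫ φ dμ`. -/
def fluct {N : ℕ} (X : Fin N → R2) (φ : R2 → ℝ) (μ : Measure R2) : ℝ :=
  (∑ i, φ (X i)) - (N : ℝ) * ∫ x, φ x ∂μ

/-- The 2D Coulomb energy `F(X_N, μ)`, written out by expanding the square
(off-diagonal point-point terms, cross terms, background-background term). -/
def coulombF {N : ℕ} (X : Fin N → R2) (μ : Measure R2) : ℝ :=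
  (1/2) * ((∑ i, ∑ j ∈ Finset.univ.erase i, -Real.log (dist (X i) (X j)))
    - 2 * (N : ℝ) * ∑ i, ∫ y, -Real.log (dist (X i) y) ∂μ
    + (N : ℝ)^2 * ∫ x, ∫ y, -Real.log (dist x y) ∂μ ∂μ)

/-- `∇_z log |z − x| = (z−x)/|z−x|²`. -/
def gradLog (z x : R2) : R2 := (dist z x ^ 2)⁻¹ • (z - x)

/-- The electric field `∇h^μ(z) = ∑ᵢ −∇log|z−xᵢ| − N ∫ −∇log|z−x| dμ(x)`. -/
def elecField {N : ℕ} (X : Fin N → R2) (μ : Measure R2) (z : R2) : R2 :=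
  -(∑ i, gradLog z (X i)) + (N : ℝ) • ∫ x, gradLog z x ∂μ

/-- `∇f_η(z)` where `f_η(z) = (log η − log|z|)₊`. -/
def gradTrunc (η : ℝ) (z : R2) : R2 := if ‖z‖ < η then -((‖z‖^2)⁻¹ • z) else 0

/-- The truncated electric field `∇h^μ_{η⃗}`. -/
def truncField {N : ℕ} (X : Fin N → R2) (μ : Measure R2) (η : Fin N → ℝ) (z : R2) : R2 :=
  elecField X μ z - ∑ i, gradTrunc (η i) (z - X i)

/-- Divergence of a vector field on `ℝ²`. -/
def div2 (ψ : R2 → R2) (x : R2) : ℝ :=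
  ∑ i, fderiv ℝ ψ x (EuclideanSpace.single i 1) i

/-- Laplacian on `ℝ²`. -/
def lap (f : R2 → ℝ) (x : R2) : ℝ := div2 (gradient f) x

/-- The integrand `⟨E, (2Dψ − (div ψ) Id) E⟩`. -/
def aniIntegrand (ψ : R2 → R2) (E : R2 → R2) (z : R2) : ℝ :=
  (inner ℝ (E z) ((2 : ℝ) • fderiv ℝ ψ z (E z) - div2 ψ z • E z) : ℝ)

/-- The anisotropy term
`Ani(X_N, μ, ψ) = ½ lim_{η→0⁺} (1/2π) ∫ ⟨∇h^μ_η, (2Dψ − (div ψ)Id) ∇h^μ_η⟩`. -/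
def Ani {N : ℕ} (X : Fin N → R2) (μ : Measure R2) (ψ : R2 → R2) : ℝ :=
  limUnder (𝓝[>] (0 : ℝ)) fun η =>
    (1/2) * ((2 * Real.pi)⁻¹ * ∫ z, aniIntegrand ψ (truncField X μ fun _ => η) z)

/-- `𝖠(X_N, μ, ψ) = Ani(X_N, μ, ψ) + ¼ ∑ div ψ(xᵢ)`. -/
def AniA {N : ℕ} (X : Fin N → R2) (μ : Measure R2) (ψ : R2 → R2) : ℝ :=
  Ani X μ ψ + (1/4) * ∑ i, div2 ψ (X i)

/-- Nearest-neighbour truncation distance `rᵢ = ¼ min(N^{-1/2}, min_{j≠i} |xᵢ−xⱼ|)`. -/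
def nnr {N : ℕ} (X : Fin N → R2) (i : Fin N) : ℝ :=
  (1/4) * min (1 / Real.sqrt N) (sInf {d | ∃ j, j ≠ i ∧ d = dist (X i) (X j)})

/-- Electric energy `Ele(Ω) = ∫_Ω |E_{r⃗}|²`. -/
def Ele {N : ℕ} (X : Fin N → R2) (μ : Measure R2) (Ω : Set R2) : ℝ :=
  ∫ z in Ω, ‖truncField X μ (nnr X) z‖^2

/-- Number of points within `N^{-1/2}` of `Ω`. -/
def Points {N : ℕ} (X : Fin N → R2) (Ω : Set R2) : ℕ :=
  Set.ncard {i : Fin N | infDist (X i) Ω ≤ 1 / Real.sqrt N}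

/-- The equilibrium measure setting: a probability density `m0` on `ℝ²` with compact
support `supp` which is the closure of its interior, with piecewise `C¹` boundary,
density bounded below by `cmin > 0` on `supp`, and `C³` on `supp`. -/
structure EqMeasure where
  m0 : R2 → ℝ
  supp : Set R2
  cmin : ℝ
  cmin_pos : 0 < cmin
  isCompact : IsCompact supp
  closure_int : supp = closure (interior supp)
  boundary_C1 : ∃ (n : ℕ) (γ : Fin n → ℝ → R2),
      (∀ i, ContDiffOn ℝ 1 (γ i) (Set.Icc 0 1)) ∧
      frontier supp = ⋃ i, γ i '' Set.Icc (0:ℝ) 1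
  m0_nonneg : ∀ x, 0 ≤ m0 x
  m0_lower : ∀ x ∈ supp, cmin ≤ m0 x
  m0_zero : ∀ x, x ∉ supp → m0 x = 0
  m0_C3 : ContDiffOn ℝ 3 m0 supp
  m0_prob : (∫ x, m0 x) = 1

/-- The equilibrium measure `μ₀ = m₀ · Leb`. -/
def EqMeasure.meas (E : EqMeasure) : Measure R2 :=
  volume.withDensity fun x => ENNReal.ofReal (E.m0 x)

/-- A confining potential for `μ₀`: continuous, vanishing on `Σ`, positive outside,
with `liminf_{|x|→∞} ζ(x)/log|x| > 2`. -/
def IsConfining (E : EqMeasure) (ζ : R2 → ℝ) : Prop :=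
  Continuous ζ ∧ (∀ x ∈ E.supp, ζ x = 0) ∧ (∀ x, x ∉ E.supp → 0 < ζ x) ∧
  ∃ c, 2 < c ∧ ∀ᶠ x : R2 in cocompact R2, c * Real.log ‖x‖ ≤ ζ x

/-- Total energy `F(X_N, μ₀) + ζ⃗(X_N)`. -/
def energyTotal {N : ℕ} (E : EqMeasure) (ζ : R2 → ℝ) (X : Fin N → R2) : ℝ :=
  coulombF X E.meas + 2 * (N : ℝ) * ∑ i, ζ (X i)

/-- Partition function `Z_N^β`. -/
def partitionZ (E : EqMeasure) (β : ℝ) (ζ : R2 → ℝ) (N : ℕ) : ℝ :=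
  ∫ X : Fin N → R2, Real.exp (-β * energyTotal E ζ X)

/-- The canonical Gibbs measure `ℙ_N^β`, with density
`(Z_N^β)⁻¹ exp(−β(F(X_N,μ₀) + ζ⃗(X_N)))` with respect to Lebesgue measure. -/
def gibbs (E : EqMeasure) (β : ℝ) (ζ : R2 → ℝ) (N : ℕ) : Measure (Fin N → R2) :=
  (ENNReal.ofReal (partitionZ E β ζ N)⁻¹) •
    (volume.withDensity fun X => ENNReal.ofReal (Real.exp (-β * energyTotal E ζ X)))

/-- The Gibbs density is integrable and the partition function is positive,
i.e. `Z_N^β ∈ (0, ∞)`. -/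
def GibbsOK (E : EqMeasure) (β : ℝ) (ζ : R2 → ℝ) : Prop :=
  ∀ N : ℕ, 2 ≤ N →
    Integrable (fun X : Fin N → R2 => Real.exp (-β * energyTotal E ζ X)) ∧
    0 < partitionZ E β ζ N

/-- Characteristic function of the fluctuation: `F_N(ω) = E[e^{iω⟨φ,M_N⟩}]`. -/
def charFn {N : ℕ} (P : Measure (Fin N → R2)) (φ : R2 → ℝ) (μ : Measure R2) (ω : ℝ) : ℂ :=
  ∫ X, Complex.exp (Complex.I * (ω : ℂ) * (fluct X φ μ : ℂ)) ∂P

/-- The transport vector field `∇φ/m₀`, extended by `0` outside `supp φ`. -/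
def transportField (E : EqMeasure) (φ : R2 → ℝ) (x : R2) : R2 :=
  if x ∈ tsupport φ then (E.m0 x)⁻¹ • gradient φ x else 0

/-- The rescaled test function `φ̄((· − c)/ℓ)`. -/
def scaledTest (φb : R2 → ℝ) (ℓ : ℝ) (c : R2) (x : R2) : ℝ := φb (ℓ⁻¹ • (x - c))

/-- The two admissible families of test functions: either macroscopic (`ℓ_N = 1`,
centers `0`, `supp φ̄ ⊆ int Σ`) or mesoscopic (`N^{-1/2} ≪ ℓ_N ≪ 1`, centers in `Σ`
at distance at least `d₀` from `∂Σ`). -/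
def TestFamily (E : EqMeasure) (φb : R2 → ℝ) (d0 : ℝ) (ℓ : ℕ → ℝ) (c : ℕ → R2) : Prop :=
  ((∀ N, ℓ N = 1 ∧ c N = 0) ∧ tsupport φb ⊆ interior E.supp) ∨
  ((∀ N, 0 < ℓ N) ∧ Tendsto (fun N : ℕ => 1 / (Real.sqrt N * ℓ N)) atTop (𝓝 0) ∧
    Tendsto ℓ atTop (𝓝 0) ∧
    ∀ N, c N ∈ E.supp ∧ d0 ≤ infDist (c N) (frontier E.supp))

/-- `G(ω) = E[e^{iω⟨φ,M_N⟩} Ani(X_N, μ₀, ∇φ/m₀)]`. -/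
def aniChar {N : ℕ} (P : Measure (Fin N → R2)) (E : EqMeasure) (φ : R2 → ℝ) (ω : ℝ) : ℂ :=
  ∫ X, Complex.exp (Complex.I * (ω : ℂ) * (fluct X φ E.meas : ℂ))
    * (Ani X E.meas (transportField E φ) : ℂ) ∂P

end


section AuxLemmas

open MeasureTheory Filter Metric
open scoped Topology ENNReal NNReal BigOperators Classical

private lemma lint_ball_aux (η : ℝ) :
    ∫⁻ x in ball (0:R2) η, ENNReal.ofReal ‖x‖⁻¹ ≤
      ENNReal.ofReal η * (4 * volume (ball (0:R2) 1)) := by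
  rcases le_or_gt η 0 with hη | hη
  · rw [ball_eq_empty.2 hη]
    simp
  set A : ℕ → Set R2 := fun n => ball 0 (η * 2⁻¹ ^ n) \ ball 0 (η * 2⁻¹ ^ (n+1)) with hA
  have hsub : ball (0:R2) η ⊆ insert 0 (⋃ n, A n) := by
    intro x hx
    rcases eq_or_ne x 0 with rfl | hx0
    · exact Set.mem_insert _ _
    refine Set.mem_insert_of_mem _ ?_
    have hxpos : 0 < ‖x‖ := norm_pos_iff.2 hx0
    have hxlt : ‖x‖ < η := by simpa [mem_ball, dist_zero_right] using hx
    have hex : ∃ n : ℕ, η * 2⁻¹ ^ (n+1) ≤ ‖x‖ := by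
      obtain ⟨n, hn⟩ := exists_pow_lt_of_lt_one (div_pos hxpos hη) (by norm_num : (2:ℝ)⁻¹ < 1)
      rw [lt_div_iff₀ hη] at hn
      have hps : (2:ℝ)⁻¹ ^ (n+1) = 2⁻¹ ^ n * 2⁻¹ := pow_succ _ _
      exact ⟨n, by nlinarith [pow_pos (by norm_num : (0:ℝ) < 2⁻¹) n]⟩
    have h1 : η * 2⁻¹ ^ (Nat.find hex + 1) ≤ ‖x‖ := Nat.find_spec hex
    have h2 : ‖x‖ < η * 2⁻¹ ^ Nat.find hex := by
      rcases Nat.eq_zero_or_pos (Nat.find hex) with h0 | hpos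
      · rw [h0]; simpa using hxlt
      · have hm := Nat.find_min hex (Nat.pred_lt hpos.ne')
        push_neg at hm
        calc ‖x‖ < η * 2⁻¹ ^ (Nat.find hex - 1 + 1) := hm
          _ = η * 2⁻¹ ^ Nat.find hex := by rw [Nat.sub_add_cancel hpos]
    refine Set.mem_iUnion.2 ⟨Nat.find hex, ?_⟩
    simp only [hA, Set.mem_diff, mem_ball, dist_zero_right]
    exact ⟨h2, not_lt.2 h1⟩
  have h0 : ∫⁻ x in ({(0:R2)} : Set R2), ENNReal.ofReal ‖x‖⁻¹ = 0 :=
    setLIntegral_measure_zero _ _ (measure_singleton 0)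
  calc ∫⁻ x in ball (0:R2) η, ENNReal.ofReal ‖x‖⁻¹
      ≤ ∫⁻ x in insert (0:R2) (⋃ n, A n), ENNReal.ofReal ‖x‖⁻¹ :=
        lintegral_mono_set hsub
    _ ≤ ∑' n, ∫⁻ x in A n, ENNReal.ofReal ‖x‖⁻¹ := by
        rw [Set.insert_eq]
        refine le_trans (lintegral_union_le _ _ _) ?_
        rw [h0, zero_add]
        exact lintegral_iUnion_le _ _
    _ ≤ ∑' n, ENNReal.ofReal (2 * η) * ENNReal.ofReal ((2:ℝ)⁻¹ ^ n) * volume (ball (0:R2) 1) := by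
        refine ENNReal.tsum_le_tsum fun n => ?_
        have hstep : ∫⁻ x in A n, ENNReal.ofReal ‖x‖⁻¹
            ≤ ENNReal.ofReal ((η * 2⁻¹ ^ (n+1))⁻¹) * volume (A n) := by
          refine le_trans (setLIntegral_mono' (measurableSet_ball.diff measurableSet_ball)
            (g := fun _ => ENNReal.ofReal ((η * 2⁻¹ ^ (n+1))⁻¹)) fun x hx => ?_) ?_
          · have hge : η * 2⁻¹ ^ (n+1) ≤ ‖x‖ := by
              have := hx.2
              simpa [hA, mem_ball, dist_zero_right, not_lt] using this
            exact ENNReal.ofReal_le_ofReal (inv_anti₀ (by positivity) hge)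
          · rw [setLIntegral_const]
        have hvol : volume (A n) ≤ ENNReal.ofReal ((η * 2⁻¹ ^ n)^2) * volume (ball (0:R2) 1) := by
          refine le_trans (measure_mono Set.diff_subset) ?_
          rw [Measure.addHaar_ball _ _ (by positivity : (0:ℝ) ≤ η * 2⁻¹ ^ n),
            finrank_euclideanSpace_fin]
        refine le_trans hstep ?_
        calc ENNReal.ofReal ((η * 2⁻¹ ^ (n+1))⁻¹) * volume (A n)
            ≤ ENNReal.ofReal ((η * 2⁻¹ ^ (n+1))⁻¹) *
              (ENNReal.ofReal ((η * 2⁻¹ ^ n)^2) * volume (ball (0:R2) 1)) := by gcongr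
          _ = (ENNReal.ofReal ((η * 2⁻¹ ^ (n+1))⁻¹) * ENNReal.ofReal ((η * 2⁻¹ ^ n)^2))
                * volume (ball (0:R2) 1) := by ring
          _ = ENNReal.ofReal (2 * η) * ENNReal.ofReal ((2:ℝ)⁻¹ ^ n) * volume (ball (0:R2) 1) := by
              rw [← ENNReal.ofReal_mul (by positivity), ← ENNReal.ofReal_mul (by positivity)]
              congr 2
              have hne : (2:ℝ)⁻¹ ^ n ≠ 0 := by positivity
              field_simp
              ring
    _ = ENNReal.ofReal (2 * η) * (∑' n, ENNReal.ofReal ((2:ℝ)⁻¹ ^ n)) * volume (ball (0:R2) 1) := by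
        rw [ENNReal.tsum_mul_right, ENNReal.tsum_mul_left]
    _ ≤ ENNReal.ofReal η * (4 * volume (ball (0:R2) 1)) := by
        have hhalf : ENNReal.ofReal ((2:ℝ)⁻¹) = 2⁻¹ := by
          rw [ENNReal.ofReal_inv_of_pos (by norm_num)]
          norm_num [ENNReal.ofReal_ofNat]
        have hsum : (∑' n, ENNReal.ofReal ((2:ℝ)⁻¹ ^ n)) = 2 := by
          have hpow : ∀ n : ℕ, ENNReal.ofReal ((2:ℝ)⁻¹ ^ n) = (2⁻¹ : ℝ≥0∞) ^ n := fun n => by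
            rw [ENNReal.ofReal_pow (by norm_num), hhalf]
          simp_rw [hpow, ENNReal.tsum_geometric]
          rw [← ENNReal.one_sub_inv_two]
          simp [ENNReal.sub_sub_cancel]
        have h2η : ENNReal.ofReal (2 * η) = 2 * ENNReal.ofReal η := by
          rw [ENNReal.ofReal_mul (by norm_num)]
          norm_num [ENNReal.ofReal_ofNat]
        rw [hsum, h2η]
        refine le_of_eq ?_
        ring_nf

private lemma norm_smul_inv_sq (v : R2) : ‖(‖v‖^2)⁻¹ • v‖ = ‖v‖⁻¹ := by
  rcases eq_or_ne v 0 with rfl | hv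
  · simp
  · rw [norm_smul, Real.norm_eq_abs, abs_of_nonneg (by positivity)]
    have : ‖v‖ ≠ 0 := norm_ne_zero_iff.2 hv
    field_simp

private lemma norm_gradLog (z x : R2) : ‖gradLog z x‖ = ‖z - x‖⁻¹ := by
  rw [gradLog, dist_eq_norm]
  exact norm_smul_inv_sq _

private lemma norm_gradTrunc (η : ℝ) (w : R2) :
    ‖gradTrunc η w‖ = if ‖w‖ < η then ‖w‖⁻¹ else 0 := by
  rw [gradTrunc]
  split_ifs
  · rw [norm_neg]; exact norm_smul_inv_sq _
  · simp

private lemma measurable_gradTrunc (η : ℝ) : Measurable (gradTrunc η) := by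
  unfold gradTrunc
  refine Measurable.ite (measurableSet_lt measurable_norm measurable_const) ?_ measurable_const
  exact ((measurable_norm.pow_const 2).inv.smul measurable_id).neg

private lemma measurable_gradLog_uncurry : Measurable (fun p : R2 × R2 => gradLog p.1 p.2) := by
  unfold gradLog
  exact ((measurable_dist.pow_const 2).inv.smul (measurable_fst.sub measurable_snd))

private lemma measurable_gradLog_left (x : R2) : Measurable (fun z : R2 => gradLog z x) := by
  unfold gradLog
  exact ((measurable_id.dist measurable_const).pow_const 2).inv.smul
    (measurable_id.sub measurable_const)

private lemma measurable_gradLog_right (z : R2) : Measurable (fun x : R2 => gradLog z x) := by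
  unfold gradLog
  exact ((measurable_const.dist measurable_id).pow_const 2).inv.smul
    (measurable_const.sub measurable_id)

private lemma lint_trans_aux (a : R2) (η : ℝ) :
    ∫⁻ z in ball a η, ENNReal.ofReal ‖z - a‖⁻¹ ≤
      ENNReal.ofReal η * (4 * volume (ball (0:R2) 1)) := by
  have hind : ∀ z : R2, (ball a η).indicator (fun z => ENNReal.ofReal ‖z - a‖⁻¹) z
      = (ball (0:R2) η).indicator (fun w => ENNReal.ofReal ‖w‖⁻¹) (z - a) := by
    intro z
    by_cases h : z ∈ ball a η
    · rw [Set.indicator_of_mem h, Set.indicator_of_mem]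
      simpa [mem_ball, dist_eq_norm] using h
    · rw [Set.indicator_of_notMem h, Set.indicator_of_notMem]
      simpa [mem_ball, dist_eq_norm] using h
  rw [← lintegral_indicator measurableSet_ball]
  simp_rw [hind]
  rw [show (fun z : R2 => (ball (0:R2) η).indicator (fun w => ENNReal.ofReal ‖w‖⁻¹) (z - a))
      = (fun z : R2 => (ball (0:R2) η).indicator (fun w => ENNReal.ofReal ‖w‖⁻¹) (z + -a))
      from funext fun z => by rw [sub_eq_add_neg],
    lintegral_add_right_eq_self ((ball (0:R2) η).indicator (fun w => ENNReal.ofReal ‖w‖⁻¹)) (-a),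
    lintegral_indicator measurableSet_ball]
  exact lint_ball_aux η

private lemma lint_gradTruncShift (η : ℝ) (a : R2) :
    ∫⁻ z, ENNReal.ofReal ‖gradTrunc η (z - a)‖ ≤
      ENNReal.ofReal η * (4 * volume (ball (0:R2) 1)) := by
  have hle : ∀ z : R2, ENNReal.ofReal ‖gradTrunc η (z - a)‖
      ≤ (ball a η).indicator (fun z => ENNReal.ofReal ‖z - a‖⁻¹) z := by
    intro z
    rw [norm_gradTrunc]
    split_ifs with h
    · rw [Set.indicator_of_mem (by simpa [mem_ball, dist_eq_norm] using h)]
    · simp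
  refine le_trans (lintegral_mono hle) ?_
  rw [lintegral_indicator measurableSet_ball]
  exact lint_trans_aux a η

private lemma integrable_gradTruncShift (η : ℝ) (a : R2) :
    Integrable (fun z : R2 => gradTrunc η (z - a)) volume := by
  refine ⟨((measurable_gradTrunc η).comp
    (measurable_id.sub measurable_const)).aestronglyMeasurable, ?_⟩
  rw [hasFiniteIntegral_iff_norm]
  exact lt_of_le_of_lt (lint_gradTruncShift η a)
    (ENNReal.mul_lt_top ENNReal.ofReal_lt_top
      (ENNReal.mul_lt_top (by norm_num) measure_ball_lt_top))

private lemma lint_gradLog_mu (μ : Measure R2) [IsProbabilityMeasure μ] (B : ℝ)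
    (hμB : μ ≤ (ENNReal.ofReal B) • volume) (z : R2) :
    ∫⁻ x, ENNReal.ofReal ‖gradLog z x‖ ∂μ ≤
      ENNReal.ofReal B * (4 * volume (ball (0:R2) 1)) + 1 := by
  simp_rw [norm_gradLog]
  rw [← lintegral_add_compl (fun x => ENNReal.ofReal ‖z - x‖⁻¹)
    (measurableSet_ball (x := z) (ε := 1))]
  have h1 : ∫⁻ x in ball z 1, ENNReal.ofReal ‖z - x‖⁻¹ ∂μ ≤
      ENNReal.ofReal B * (4 * volume (ball (0:R2) 1)) := by
    calc ∫⁻ x in ball z 1, ENNReal.ofReal ‖z - x‖⁻¹ ∂μ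
        ≤ ∫⁻ x in ball z 1, ENNReal.ofReal ‖z - x‖⁻¹ ∂((ENNReal.ofReal B) • volume) :=
          lintegral_mono' (Measure.restrict_mono subset_rfl hμB) le_rfl
      _ = ENNReal.ofReal B * ∫⁻ x in ball z 1, ENNReal.ofReal ‖x - z‖⁻¹ ∂volume := by
          rw [Measure.restrict_smul, lintegral_smul_measure]
          congr 1
          refine lintegral_congr fun x => by rw [norm_sub_rev]
      _ ≤ ENNReal.ofReal B * (ENNReal.ofReal 1 * (4 * volume (ball (0:R2) 1))) := by
          gcongr
          exact lint_trans_aux z 1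
      _ = ENNReal.ofReal B * (4 * volume (ball (0:R2) 1)) := by
          rw [ENNReal.ofReal_one, one_mul]
  have h2 : ∫⁻ x in (ball z 1)ᶜ, ENNReal.ofReal ‖z - x‖⁻¹ ∂μ ≤ 1 := by
    calc ∫⁻ x in (ball z 1)ᶜ, ENNReal.ofReal ‖z - x‖⁻¹ ∂μ
        ≤ ∫⁻ _x in (ball z 1)ᶜ, 1 ∂μ := by
          refine setLIntegral_mono' measurableSet_ball.compl fun x hx => ?_
          have h1x : (1:ℝ) ≤ ‖z - x‖ := by
            have := hx
            simp only [Set.mem_compl_iff, mem_ball, not_lt] at this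
            calc (1:ℝ) ≤ dist x z := this
              _ = ‖z - x‖ := by rw [dist_eq_norm, norm_sub_rev]
          calc ENNReal.ofReal ‖z - x‖⁻¹ ≤ ENNReal.ofReal 1 :=
              ENNReal.ofReal_le_ofReal (inv_le_one_of_one_le₀ h1x)
            _ = 1 := ENNReal.ofReal_one
      _ ≤ ∫⁻ _x, 1 ∂μ := lintegral_mono' Measure.restrict_le_self le_rfl
      _ = 1 := by simp
  exact add_le_add h1 h2

private lemma integrable_gradLog_mu (μ : Measure R2) [IsProbabilityMeasure μ] (B : ℝ)
    (hμB : μ ≤ (ENNReal.ofReal B) • volume) (z : R2) :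
    Integrable (fun x => gradLog z x) μ := by
  refine ⟨(measurable_gradLog_right z).aestronglyMeasurable, ?_⟩
  rw [hasFiniteIntegral_iff_norm]
  exact lt_of_le_of_lt (lint_gradLog_mu μ B hμB z)
    (ENNReal.add_lt_top.2 ⟨ENNReal.mul_lt_top ENNReal.ofReal_lt_top
      (ENNReal.mul_lt_top (by norm_num) measure_ball_lt_top), ENNReal.one_lt_top⟩)

private lemma norm_integral_gradLog_mu (μ : Measure R2) [IsProbabilityMeasure μ] (B : ℝ)
    (hμB : μ ≤ (ENNReal.ofReal B) • volume) (z : R2) :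
    ‖∫ x, gradLog z x ∂μ‖ ≤
      (ENNReal.ofReal B * (4 * volume (ball (0:R2) 1)) + 1).toReal := by
  refine le_trans (norm_integral_le_integral_norm _) ?_
  rw [integral_eq_lintegral_of_nonneg_ae (Eventually.of_forall fun x => norm_nonneg _)
    (measurable_gradLog_right z).norm.aestronglyMeasurable]
  refine ENNReal.toReal_mono ?_ (lint_gradLog_mu μ B hμB z)
  exact ENNReal.add_ne_top.2 ⟨ENNReal.mul_ne_top ENNReal.ofReal_ne_top
    (ENNReal.mul_ne_top (by norm_num) measure_ball_lt_top.ne), ENNReal.one_ne_top⟩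

private lemma cs_helper (f : R2 → R2) (Ω : Set R2) (hvol : volume Ω ≠ ⊤)
    (hmeas : AEStronglyMeasurable f (volume.restrict Ω)) (C : ℝ) (hC : ∀ z, ‖f z‖ ≤ C) :
    ∫ z in Ω, ‖f z‖ ≤ Real.sqrt (volume Ω).toReal * Real.sqrt (∫ z in Ω, ‖f z‖^2) := by
  haveI : IsFiniteMeasure (volume.restrict Ω) :=
    ⟨by rwa [Measure.restrict_apply_univ, lt_top_iff_ne_top]⟩
  have hpq : Real.HolderConjugate 2 2 := Real.HolderConjugate.two_two
  have hf2 : MemLp f (ENNReal.ofReal 2) (volume.restrict Ω) := by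
    rw [ENNReal.ofReal_ofNat]
    exact MemLp.of_bound hmeas C (Eventually.of_forall hC)
  have hg2 : MemLp (fun _ : R2 => (1:ℝ)) (ENNReal.ofReal 2) (volume.restrict Ω) :=
    memLp_const 1
  have h := integral_mul_norm_le_Lp_mul_Lq hpq hf2.norm hg2
  simp only [norm_one, mul_one, norm_norm] at h
  have e1 : (∫ (a : R2) in Ω, ‖f a‖ ^ (2:ℝ)) = ∫ z in Ω, ‖f z‖^2 :=
    integral_congr_ae (Eventually.of_forall fun z => by
      exact_mod_cast Real.rpow_natCast ‖f z‖ 2)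
  have e2 : (∫ (_a : R2) in Ω, (1:ℝ) ^ (2:ℝ)) = (volume Ω).toReal := by
    simp [Measure.real]
  rw [e1, e2] at h
  refine le_trans h (le_of_eq ?_)
  rw [Real.sqrt_eq_rpow, Real.sqrt_eq_rpow, mul_comm]

private lemma truncField_eq' {N : ℕ} (X : Fin N → R2) (μ : Measure R2) (η : Fin N → ℝ) (z : R2) :
    truncField X μ η z =
      (∑ i, (-gradLog z (X i) - gradTrunc (η i) (z - X i))) + (N:ℝ) • ∫ x, gradLog z x ∂μ := by
  simp only [truncField, elecField, Finset.sum_sub_distrib, Finset.sum_neg_distrib]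
  abel

private lemma elecField_eq' {N : ℕ} (X : Fin N → R2) (μ : Measure R2) (η : Fin N → ℝ) (z : R2) :
    elecField X μ z = truncField X μ η z + ∑ i, gradTrunc (η i) (z - X i) := by
  simp [truncField]

private lemma pair_bound (z a : R2) (r : ℝ) (hr : 0 < r) :
    ‖-gradLog z a - gradTrunc r (z - a)‖ ≤ r⁻¹ := by
  by_cases h : ‖z - a‖ < r
  · have h0 : -gradLog z a - gradTrunc r (z - a) = 0 := by
      rw [gradLog, gradTrunc, if_pos h, dist_eq_norm]
      abel
    rw [h0, norm_zero]
    positivity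
  · rw [gradTrunc, if_neg h, sub_zero, norm_neg, norm_gradLog]
    exact inv_anti₀ hr (not_lt.1 h)

private lemma nnr_pos {N : ℕ} (hN : 2 ≤ N) (X : Fin N → R2) (hX : Function.Injective X)
    (i : Fin N) : 0 < nnr X i := by
  have hNpos : (0:ℝ) < Real.sqrt N :=
    Real.sqrt_pos.2 (by exact_mod_cast show 0 < N by omega)
  have h1 : (0:ℝ) < 1 / Real.sqrt N := by positivity
  set S := {d | ∃ j, j ≠ i ∧ d = dist (X i) (X j)} with hS
  have hSim : S = (fun j => dist (X i) (X j)) '' {j | j ≠ i} := by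
    ext d
    constructor
    · rintro ⟨j, hj, rfl⟩; exact ⟨j, hj, rfl⟩
    · rintro ⟨j, hj, rfl⟩; exact ⟨j, hj, rfl⟩
  have hfin : S.Finite := by rw [hSim]; exact (Set.toFinite _).image _
  haveI : Nontrivial (Fin N) := Fin.nontrivial_iff_two_le.2 hN
  obtain ⟨j, hj⟩ := exists_ne i
  have hne : S.Nonempty := ⟨dist (X i) (X j), j, hj, rfl⟩
  obtain ⟨k, hk, hdk⟩ := hne.csInf_mem hfin
  have h2 : 0 < sInf S := by
    rw [hdk]
    exact dist_pos.2 fun h => hk (hX h).symm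
  rw [nnr]
  have := lt_min h1 h2
  rw [← hS]
  nlinarith

private lemma nnr_le' {N : ℕ} (X : Fin N → R2) (i : Fin N) :
    nnr X i ≤ (1/4) * (1 / Real.sqrt N) := by
  rw [nnr]
  have := min_le_left (1 / Real.sqrt N) (sInf {d | ∃ j, j ≠ i ∧ d = dist (X i) (X j)})
  nlinarith

end AuxLemmas

/-- `L¹` control of the electric field by the truncated energy and
the number of points, with a universal constant `K`. -/
theorem elecField_L1_control :
    ∃ K > 0, ∀ (N : ℕ), 2 ≤ N → ∀ X : Fin N → R2, Function.Injective X →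
      ∀ μ : Measure R2, IsProbabilityMeasure μ →
      ∀ m : R2 → ℝ, μ = volume.withDensity (fun x => ENNReal.ofReal (m x)) →
      (∃ B, ∀ x, |m x| ≤ B) → IsCompact (tsupport m) →
      ∀ Ω : Set R2, MeasurableSet Ω → Bornology.IsBounded Ω →
        IntegrableOn (fun z => ‖elecField X μ z‖) Ω volume ∧
        (∫ z in Ω, ‖elecField X μ z‖) ≤
          Real.sqrt (volume Ω).toReal * Real.sqrt (Ele X μ Ω)
            + K * (Points X Ω : ℝ) / Real.sqrt N := by
  set V : ℝ≥0∞ := volume (ball (0:R2) 1) with hV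
  have hVfin : V ≠ ⊤ := measure_ball_lt_top.ne
  have hVt0 : 0 ≤ V.toReal := ENNReal.toReal_nonneg
  refine ⟨V.toReal + 1, by linarith, ?_⟩
  intro N hN X hX μ hμ m hm hBex hcomp Ω hΩmeas hΩbd
  haveI := hμ
  obtain ⟨B, hB⟩ := hBex
  have hB0 : 0 ≤ B := le_trans (abs_nonneg (m 0)) (hB 0)
  have hμB : μ ≤ ENNReal.ofReal B • volume := by
    refine Measure.le_iff.2 fun s hs => ?_
    rw [hm, withDensity_apply _ hs, Measure.smul_apply, smul_eq_mul]
    calc ∫⁻ x in s, ENNReal.ofReal (m x) ∂volume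
        ≤ ∫⁻ _x in s, ENNReal.ofReal B ∂volume :=
          lintegral_mono fun x => ENNReal.ofReal_le_ofReal ((le_abs_self _).trans (hB x))
      _ = ENNReal.ofReal B * volume s := setLIntegral_const s _
  set T : R2 → R2 := truncField X μ (nnr X) with hT
  set g : Fin N → R2 → R2 := fun i z => gradTrunc (nnr X i) (z - X i) with hg
  have hsqrtN : (0:ℝ) < Real.sqrt N :=
    Real.sqrt_pos.2 (by exact_mod_cast show 0 < N by omega)
  -- measurability
  have hIsm : StronglyMeasurable (fun z : R2 => ∫ x, gradLog z x ∂μ) :=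
    measurable_gradLog_uncurry.stronglyMeasurable.integral_prod_right'
  have hTsm : StronglyMeasurable T := by
    rw [hT]
    unfold truncField elecField
    refine StronglyMeasurable.sub (StronglyMeasurable.add ?_ (by exact hIsm.const_smul (N:ℝ))) ?_
    · exact (Finset.measurable_sum Finset.univ fun i _ =>
        measurable_gradLog_left (X i)).neg.stronglyMeasurable
    · exact (Finset.measurable_sum Finset.univ fun i _ =>
        (measurable_gradTrunc _).comp (measurable_id.sub measurable_const)).stronglyMeasurable
  -- bounds
  have hrpos : ∀ i, 0 < nnr X i := nnr_pos hN X hX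
  set Cμ : ℝ≥0∞ := ENNReal.ofReal B * (4 * V) + 1 with hCμ
  have hIbd : ∀ z, ‖∫ x, gradLog z x ∂μ‖ ≤ Cμ.toReal := fun z =>
    norm_integral_gradLog_mu μ B hμB z
  set Mb : ℝ := (∑ i, (nnr X i)⁻¹) + N * Cμ.toReal with hMb
  have hTbd : ∀ z, ‖T z‖ ≤ Mb := by
    intro z
    rw [hT, truncField_eq']
    refine le_trans (norm_add_le _ _) (add_le_add ?_ ?_)
    · exact le_trans (norm_sum_le _ _)
        (Finset.sum_le_sum fun i _ => pair_bound z (X i) _ (hrpos i))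
    · rw [norm_smul, Real.norm_natCast]
      exact mul_le_mul_of_nonneg_left (hIbd z) (Nat.cast_nonneg N)
  have hΩvol : volume Ω ≠ ⊤ := hΩbd.measure_lt_top.ne
  haveI : IsFiniteMeasure (volume.restrict Ω) :=
    ⟨by rwa [Measure.restrict_apply_univ, lt_top_iff_ne_top]⟩
  have hT2 : MemLp T 2 (volume.restrict Ω) :=
    MemLp.of_bound hTsm.aestronglyMeasurable Mb (Eventually.of_forall hTbd)
  have hTint : IntegrableOn T Ω volume :=
    memLp_one_iff_integrable.1 (hT2.mono_exponent (by norm_num))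
  have hgint : ∀ i, Integrable (g i) volume := fun i => integrable_gradTruncShift _ _
  have hsumint : IntegrableOn (fun z => ∑ i, g i z) Ω volume :=
    (integrable_finset_sum _ fun i _ => hgint i).integrableOn
  have helec : elecField X μ = fun z => T z + ∑ i, g i z :=
    funext fun z => elecField_eq' X μ (nnr X) z
  have helecInt : IntegrableOn (elecField X μ) Ω volume := by
    rw [helec]; exact hTint.add hsumint
  refine ⟨helecInt.norm, ?_⟩
  -- Cauchy-Schwarz part
  have hEle : Ele X μ Ω = ∫ z in Ω, ‖T z‖^2 := rfl
  have hCS : ∫ z in Ω, ‖T z‖ ≤ Real.sqrt (volume Ω).toReal * Real.sqrt (Ele X μ Ω) := by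
    rw [hEle]
    exact cs_helper T Ω hΩvol hTsm.aestronglyMeasurable Mb hTbd
  -- truncation tails
  set P : Finset (Fin N) := Finset.univ.filter (fun i => infDist (X i) Ω ≤ 1 / Real.sqrt N)
    with hP
  set t : Fin N → ℝ := fun i => ∫ z in Ω, ‖g i z‖ with ht
  have htzero : ∀ i ∉ P, t i = 0 := by
    intro i hi
    have hi' : ¬ (infDist (X i) Ω ≤ 1 / Real.sqrt N) := by
      intro hcon
      exact hi (Finset.mem_filter.2 ⟨Finset.mem_univ i, hcon⟩)
    refine setIntegral_eq_zero_of_forall_eq_zero fun z hz => ?_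
    have hfar : ¬ (‖z - X i‖ < nnr X i) := by
      intro hlt
      refine hi' ?_
      have h1 : infDist (X i) Ω ≤ dist (X i) z := infDist_le_dist_of_mem hz
      have h2 : dist (X i) z = ‖z - X i‖ := by rw [dist_eq_norm, norm_sub_rev]
      have h3 := nnr_le' X i
      have h4 : (0:ℝ) ≤ 1 / Real.sqrt N := by positivity
      linarith [h1, hlt, h3]
    show ‖gradTrunc (nnr X i) (z - X i)‖ = 0
    rw [gradTrunc, if_neg hfar, norm_zero]
  have htle : ∀ i, t i ≤ V.toReal / Real.sqrt N := by
    intro i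
    have h1 : t i ≤ ∫ z, ‖g i z‖ :=
      setIntegral_le_integral (hgint i).norm (Eventually.of_forall fun z => norm_nonneg _)
    have h2 : (∫ z, ‖g i z‖) = (∫⁻ z, ENNReal.ofReal ‖g i z‖).toReal :=
      integral_eq_lintegral_of_nonneg_ae (Eventually.of_forall fun z => norm_nonneg _)
        (hgint i).aestronglyMeasurable.norm
    have h3 : (∫⁻ z, ENNReal.ofReal ‖g i z‖) ≤ ENNReal.ofReal (nnr X i) * (4 * V) :=
      lint_gradTruncShift _ _
    have h4 : ((∫⁻ z, ENNReal.ofReal ‖g i z‖)).toReal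
        ≤ (ENNReal.ofReal (nnr X i) * (4 * V)).toReal :=
      ENNReal.toReal_mono (ENNReal.mul_ne_top ENNReal.ofReal_ne_top
        (ENNReal.mul_ne_top (by norm_num) hVfin)) h3
    have h5 : (ENNReal.ofReal (nnr X i) * (4 * V)).toReal = nnr X i * (4 * V.toReal) := by
      rw [ENNReal.toReal_mul, ENNReal.toReal_ofReal (hrpos i).le, ENNReal.toReal_mul]
      norm_num
    have h6 : nnr X i * (4 * V.toReal) ≤ (1/4) * (1 / Real.sqrt N) * (4 * V.toReal) :=
      mul_le_mul_of_nonneg_right (nnr_le' X i) (by positivity)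
    have h7 : (1/4) * (1 / Real.sqrt N) * (4 * V.toReal) = V.toReal / Real.sqrt N := by
      field_simp
    calc t i ≤ ∫ z, ‖g i z‖ := h1
      _ = (∫⁻ z, ENNReal.ofReal ‖g i z‖).toReal := h2
      _ ≤ (ENNReal.ofReal (nnr X i) * (4 * V)).toReal := h4
      _ = nnr X i * (4 * V.toReal) := h5
      _ ≤ (1/4) * (1 / Real.sqrt N) * (4 * V.toReal) := h6
      _ = V.toReal / Real.sqrt N := h7
  have hPcard : (Points X Ω : ℝ) = (P.card : ℝ) := by
    have hset : {i : Fin N | infDist (X i) Ω ≤ 1 / Real.sqrt N} = (P : Set (Fin N)) := by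
      ext i; simp [hP]
    rw [show Points X Ω = P.card by rw [Points, hset, Set.ncard_coe_finset]]
  have hsumt : ∑ i, t i ≤ (Points X Ω : ℝ) * (V.toReal / Real.sqrt N) := by
    rw [← Finset.sum_subset (Finset.subset_univ P) (fun i _ hi => htzero i hi)]
    refine le_trans (Finset.sum_le_card_nsmul P t _ fun i _ => htle i) ?_
    rw [nsmul_eq_mul, hPcard]
  -- assemble
  calc ∫ z in Ω, ‖elecField X μ z‖
      = ∫ z in Ω, ‖T z + ∑ i, g i z‖ := by rw [helec]
    _ ≤ ∫ z in Ω, (‖T z‖ + ∑ i, ‖g i z‖) := by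
        refine integral_mono (by rw [helec] at helecInt; exact helecInt.norm)
          (hTint.norm.add (integrable_finset_sum _ fun i _ => (hgint i).norm).integrableOn)
          fun z => ?_
        exact le_trans (norm_add_le _ _) (add_le_add le_rfl (norm_sum_le _ _))
    _ = (∫ z in Ω, ‖T z‖) + ∑ i, t i := by
        rw [integral_add hTint.norm
          (integrable_finset_sum _ fun i _ => (hgint i).norm).integrableOn,
          integral_finset_sum _ fun i _ => (hgint i).norm.integrableOn]
    _ ≤ Real.sqrt (volume Ω).toReal * Real.sqrt (Ele X μ Ω)
        + (Points X Ω : ℝ) * (V.toReal / Real.sqrt N) := add_le_add hCS hsumt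
    _ ≤ Real.sqrt (volume Ω).toReal * Real.sqrt (Ele X μ Ω)
        + (V.toReal + 1) * (Points X Ω : ℝ) / Real.sqrt N := by
        have hp : (0:ℝ) ≤ (Points X Ω : ℝ) := Nat.cast_nonneg _
        have key : (Points X Ω : ℝ) * (V.toReal / Real.sqrt N)
            ≤ (V.toReal + 1) * (Points X Ω : ℝ) / Real.sqrt N := by
          have hrw : (Points X Ω : ℝ) * (V.toReal / Real.sqrt N)
              = V.toReal * (Points X Ω : ℝ) / Real.sqrt N := by ring
          rw [hrw]
          gcongr
          linarith
        linarith
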